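/- Let B be a σ-unital C*-algebra, A a separable C*-algebra, and φ = (φ_t) : A → M(B) an equi-continuous family with sup_t ‖φ_t(a)‖ < ∞ for all a. Let {u_n} be a unit sequence in B, set Δ_0 = √u_0, Δ_n = √(u_n − u_{n-1}), and let {t_n} be a discretization. Then for every a ∈ A the series Σ_{j=0}^∞ Δ_j φ_{t_j}(a) Δ_j converges in the strict topology of M(B), and ‖Σ_{j=0}^∞ Δ_j φ_{t_j}(a) Δ_j‖ ≤ 3 sup_j ‖φ_{t_j}(a)‖. -/

import Mathlib

open Filter Topology MultiplierAlgebra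

section BAux
variable {B : Type*} [NonUnitalCStarAlgebra B] [PartialOrder B] [StarOrderedRing B]

lemma aux_sqrt_orth {x y : B} (hx : 0 ≤ x) (hy : 0 ≤ y) (h : x * y = 0) :
    CFC.sqrt x * CFC.sqrt y = 0 := by
  have hsy : IsSelfAdjoint (CFC.sqrt y) := IsSelfAdjoint.of_nonneg (CFC.sqrt_nonneg y)
  have hsx : IsSelfAdjoint (CFC.sqrt x) := IsSelfAdjoint.of_nonneg (CFC.sqrt_nonneg x)
  have hxsa : IsSelfAdjoint x := IsSelfAdjoint.of_nonneg hx
  have step1 : x * CFC.sqrt y = 0 := by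
    rw [← CStarRing.mul_star_self_eq_zero_iff]
    calc x * CFC.sqrt y * star (x * CFC.sqrt y)
        = x * (CFC.sqrt y * CFC.sqrt y) * x := by
          rw [star_mul, hsy.star_eq, hxsa.star_eq]; simp [mul_assoc]
      _ = x * y * x := by rw [CFC.sqrt_mul_sqrt_self y hy]
      _ = 0 := by rw [h, zero_mul]
  have step2 : CFC.sqrt y * x = 0 := by
    have := congrArg star step1
    rwa [star_mul, star_zero, hsy.star_eq, hxsa.star_eq] at this
  rw [← CStarRing.star_mul_self_eq_zero_iff]
  calc star (CFC.sqrt x * CFC.sqrt y) * (CFC.sqrt x * CFC.sqrt y)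
      = CFC.sqrt y * (CFC.sqrt x * CFC.sqrt x) * CFC.sqrt y := by
        rw [star_mul, hsy.star_eq, hsx.star_eq]; simp [mul_assoc]
    _ = CFC.sqrt y * x * CFC.sqrt y := by rw [CFC.sqrt_mul_sqrt_self x hx]
    _ = 0 := by rw [step2, zero_mul]

end BAux

section MAux
variable {C : Type*} [CStarAlgebra C] [PartialOrder C] [StarOrderedRing C]

lemma aux_algMono {r s : ℝ} (h : r ≤ s) : algebraMap ℝ C r ≤ algebraMap ℝ C s := by
  rw [← sub_nonneg, ← map_sub]
  have h0 : (0:ℝ) ≤ s - r := by linarith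
  have hstar : star (algebraMap ℝ C (Real.sqrt (s - r))) = algebraMap ℝ C (Real.sqrt (s - r)) := by
    rw [Algebra.algebraMap_eq_smul_one, star_smul, star_one, star_trivial]
  have : algebraMap ℝ C (s - r) = star (algebraMap ℝ C (Real.sqrt (s - r)))
      * algebraMap ℝ C (Real.sqrt (s - r)) := by
    rw [hstar, ← map_mul, Real.mul_self_sqrt h0]
  rw [this]
  exact star_mul_self_nonneg _

lemma aux_diag (F : Finset ℕ) (d m : ℕ → C) (M : ℝ)
    (hd : ∀ j, IsSelfAdjoint (d j)) (hd1 : ∀ j, ‖d j‖ ≤ 1) (hm : ∀ j, ‖m j‖ ≤ M)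
    (horth : ∀ i ∈ F, ∀ j ∈ F, i ≠ j → d i * d j = 0) :
    star (∑ j ∈ F, d j * m j * d j) * (∑ j ∈ F, d j * m j * d j)
      ≤ algebraMap ℝ C (M ^ 2) * ∑ j ∈ F, d j * d j := by
  have hM : 0 ≤ M := le_trans (norm_nonneg _) (hm 0)
  have expand : star (∑ j ∈ F, d j * m j * d j) * (∑ j ∈ F, d j * m j * d j)
      = ∑ j ∈ F, star (d j * m j * d j) * (d j * m j * d j) := by
    rw [star_sum, Finset.sum_mul_sum]
    refine Finset.sum_congr rfl fun i hi => ?_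
    refine Finset.sum_eq_single_of_mem i hi fun j hj hne => ?_
    have h0 : d i * (d j * (m j * d j)) = 0 := by
      rw [← mul_assoc, horth i hi j hj (fun h => hne h.symm), zero_mul]
    simp only [star_mul, (hd _).star_eq, mul_assoc, h0, mul_zero]
  rw [expand, Finset.mul_sum]
  refine Finset.sum_le_sum fun i _ => ?_
  have hdd : (0:C) ≤ d i * d i := by
    have := star_mul_self_nonneg (d i); rwa [(hd i).star_eq] at this
  have h1 : d i * d i ≤ 1 := by
    calc d i * d i ≤ algebraMap ℝ C ‖d i * d i‖ :=
          IsSelfAdjoint.le_algebraMap_norm_self (IsSelfAdjoint.of_nonneg hdd)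
      _ ≤ algebraMap ℝ C 1 := aux_algMono <| le_trans (norm_mul_le _ _) <|
          mul_le_one₀ (hd1 i) (norm_nonneg _) (hd1 i)
      _ = 1 := map_one _
  have h2 : star (m i) * m i ≤ algebraMap ℝ C (M ^ 2) :=
    le_trans CStarAlgebra.star_mul_le_algebraMap_norm_sq
      (aux_algMono (pow_le_pow_left₀ (norm_nonneg _) (hm i) 2))
  calc star (d i * m i * d i) * (d i * m i * d i)
      = star (m i * d i) * (d i * d i) * (m i * d i) := by
        simp only [star_mul, (hd _).star_eq, mul_assoc]
    _ ≤ star (m i * d i) * 1 * (m i * d i) := star_left_conjugate_le_conjugate h1 _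
    _ = star (d i) * (star (m i) * m i) * d i := by
        simp only [star_mul, (hd _).star_eq, mul_one, mul_assoc]
    _ ≤ star (d i) * algebraMap ℝ C (M ^ 2) * d i := star_left_conjugate_le_conjugate h2 _
    _ = algebraMap ℝ C (M ^ 2) * (d i * d i) := by
        rw [(hd i).star_eq, ← Algebra.commutes (M ^ 2) (d i), mul_assoc]

end MAux

section DCAux
variable {B : Type*} [NonUnitalCStarAlgebra B]

lemma aux_cancel_left {z w : B} (h : ∀ v : B, v * z = v * w) : z = w := by
  have h2 : star (z - w) * (z - w) = 0 := by
    rw [mul_sub, h (star (z - w)), ← mul_sub, sub_self, mul_zero]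
  rw [CStarRing.star_mul_self_eq_zero_iff] at h2
  exact sub_eq_zero.mp h2

lemma aux_cancel_right {z w : B} (h : ∀ v : B, z * v = w * v) : z = w := by
  have h2 : (z - w) * star (z - w) = 0 := by
    rw [sub_mul, h (star (z - w)), ← sub_mul, sub_self, zero_mul]
  rw [CStarRing.mul_star_self_eq_zero_iff] at h2
  exact sub_eq_zero.mp h2

lemma aux_fst_mul (m : 𝓜(ℂ, B)) (a x : B) : m.fst (a * x) = m.fst a * x := by
  refine aux_cancel_left fun v => ?_
  calc v * m.fst (a * x) = m.snd v * (a * x) := (m.central v (a * x)).symm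
    _ = m.snd v * a * x := (mul_assoc _ _ _).symm
    _ = v * m.fst a * x := by rw [m.central]
    _ = v * (m.fst a * x) := mul_assoc _ _ _

lemma aux_snd_mul (m : 𝓜(ℂ, B)) (a x : B) : m.snd (x * a) = x * m.snd a := by
  refine aux_cancel_right fun v => ?_
  calc m.snd (x * a) * v = (x * a) * m.fst v := m.central _ _
    _ = x * (a * m.fst v) := mul_assoc _ _ _
    _ = x * (m.snd a * v) := by rw [m.central]
    _ = x * m.snd a * v := (mul_assoc _ _ _).symm

lemma aux_mul_coe (m : 𝓜(ℂ, B)) (a : B) :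
    m * (DoubleCentralizer.coeHom (𝕜 := ℂ) a) = DoubleCentralizer.coeHom (𝕜 := ℂ) (m.fst a) := by
  refine DoubleCentralizer.ext _ _ _ _ (Prod.ext ?_ ?_)
  · ext x
    show (m * (a : 𝓜(ℂ, B))).fst x = ((m.fst a : B) : 𝓜(ℂ, B)).fst x
    rw [DoubleCentralizer.mul_fst, DoubleCentralizer.coe_fst, DoubleCentralizer.coe_fst]
    show m.fst (ContinuousLinearMap.mul ℂ B a x) = _
    rw [ContinuousLinearMap.mul_apply', ContinuousLinearMap.mul_apply']
    exact aux_fst_mul m a x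
  · ext x
    show (m * (a : 𝓜(ℂ, B))).snd x = ((m.fst a : B) : 𝓜(ℂ, B)).snd x
    rw [DoubleCentralizer.mul_snd, DoubleCentralizer.coe_snd, DoubleCentralizer.coe_snd]
    show (ContinuousLinearMap.mul ℂ B).flip a (m.snd x) = (ContinuousLinearMap.mul ℂ B).flip (m.fst a) x
    simp only [ContinuousLinearMap.flip_apply, ContinuousLinearMap.mul_apply']
    exact (m.central x a).symm ▸ (m.central x a)

lemma aux_coe_mul (m : 𝓜(ℂ, B)) (a : B) :
    (DoubleCentralizer.coeHom (𝕜 := ℂ) a) * m = DoubleCentralizer.coeHom (𝕜 := ℂ) (m.snd a) := by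
  refine DoubleCentralizer.ext _ _ _ _ (Prod.ext ?_ ?_)
  · ext x
    show ((a : 𝓜(ℂ, B)) * m).fst x = ((m.snd a : B) : 𝓜(ℂ, B)).fst x
    rw [DoubleCentralizer.mul_fst, DoubleCentralizer.coe_fst, DoubleCentralizer.coe_fst]
    show ContinuousLinearMap.mul ℂ B a (m.fst x) = ContinuousLinearMap.mul ℂ B (m.snd a) x
    simp only [ContinuousLinearMap.mul_apply']
    exact (m.central a x).symm
  · ext x
    show ((a : 𝓜(ℂ, B)) * m).snd x = ((m.snd a : B) : 𝓜(ℂ, B)).snd x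
    rw [DoubleCentralizer.mul_snd, DoubleCentralizer.coe_snd, DoubleCentralizer.coe_snd]
    show m.snd ((ContinuousLinearMap.mul ℂ B).flip a x) = (ContinuousLinearMap.mul ℂ B).flip (m.snd a) x
    simp only [ContinuousLinearMap.flip_apply, ContinuousLinearMap.mul_apply']
    exact aux_snd_mul m a x

lemma aux_norm_coe (a : B) : ‖(DoubleCentralizer.coeHom (𝕜 := ℂ) a : 𝓜(ℂ, B))‖ = ‖a‖ := by
  rw [← DoubleCentralizer.norm_fst]
  show ‖((a : 𝓜(ℂ, B))).fst‖ = ‖a‖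
  rw [DoubleCentralizer.coe_fst]
  exact ContinuousLinearMap.opNorm_mul_apply ℂ B a

end DCAux
set_option maxHeartbeats 2000000

theorem folding_sum_strictly_convergent
    (A B : Type*) [NonUnitalCStarAlgebra A] [TopologicalSpace.SeparableSpace A]
    [NonUnitalCStarAlgebra B] [PartialOrder B] [StarOrderedRing B]
    (b : B) (hb_pos : 0 ≤ b) (hb_norm : ‖b‖ ≤ 1)
    (hb_strict : Dense (Set.range fun x : B => b * x * b))
    (φ : ℝ → A → 𝓜(ℂ, B))
    (hequi : Equicontinuous fun t : Set.Ici (1:ℝ) => φ t)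
    (hbdd : ∀ a, ∃ M : ℝ, ∀ t ∈ Set.Ici (1:ℝ), ‖φ t a‖ ≤ M)
    -- unit sequence
    (u : ℕ → B) (hmono : Monotone u)
    (hfn : ∀ n, ∃ f : ℝ → ℝ, ContinuousOn f (Set.Icc 0 1) ∧
      (∀ x ∈ Set.Icc (0:ℝ) 1, f x ∈ Set.Icc (0:ℝ) 1) ∧
      (∃ η > 0, ∀ x ∈ Set.Ioo (-η) η, f x = 0) ∧ u n = cfcₙ f b)
    (hunit : ∀ n, u (n + 1) * u n = u n)
    (happrox : Tendsto (fun n => u n * b) atTop (𝓝 b))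
    (Δ : ℕ → B)
    (hΔ0 : Δ 0 = CFC.sqrt (u 0))
    (hΔ : ∀ n : ℕ, Δ (n + 1) = CFC.sqrt (u (n + 1) - u n))
    -- discretization
    (t : ℕ → ℝ) (h1 : ∀ n, 1 ≤ t n) (htmono : Monotone t)
    (httop : Tendsto t atTop atTop)
    (htgap : Tendsto (fun n => t (n + 1) - t n) atTop (𝓝 0))
    (htle : ∀ n : ℕ, 1 ≤ n → t n ≤ n) :
    ∀ a : A, ∃ S : 𝓜(ℂ, B),
      (∀ c : B,
        Tendsto (fun N => (∑ j ∈ Finset.range N,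
            (DoubleCentralizer.coeHom (𝕜 := ℂ) (Δ j)) * φ (t j) a *
              (DoubleCentralizer.coeHom (𝕜 := ℂ) (Δ j))) *
            (DoubleCentralizer.coeHom (𝕜 := ℂ) c)) atTop
          (𝓝 (S * (DoubleCentralizer.coeHom (𝕜 := ℂ) c))) ∧
        Tendsto (fun N => (DoubleCentralizer.coeHom (𝕜 := ℂ) c) *
            ∑ j ∈ Finset.range N,
              (DoubleCentralizer.coeHom (𝕜 := ℂ) (Δ j)) * φ (t j) a *
                (DoubleCentralizer.coeHom (𝕜 := ℂ) (Δ j))) atTop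
          (𝓝 ((DoubleCentralizer.coeHom (𝕜 := ℂ) c) * S))) ∧
      ‖S‖ ≤ 3 * ⨆ j : ℕ, ‖φ (t j) a‖ := by
  intro a
  -- the uniform bound
  obtain ⟨M₀, hM₀⟩ := hbdd a
  have hbddAb : BddAbove (Set.range fun j : ℕ => ‖φ (t j) a‖) :=
    ⟨M₀, by rintro x ⟨j, rfl⟩; exact hM₀ (t j) (h1 j)⟩
  set M : ℝ := ⨆ j : ℕ, ‖φ (t j) a‖ with hM_def
  set m : ℕ → 𝓜(ℂ, B) := fun j => φ (t j) a with hm_def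
  have hmM : ∀ j, ‖m j‖ ≤ M := fun j => le_ciSup hbddAb j
  have hM0 : (0:ℝ) ≤ M := le_trans (norm_nonneg _) (hmM 0)
  -- quasispectrum of b
  have hbsa : IsSelfAdjoint b := IsSelfAdjoint.of_nonneg hb_pos
  have hqs : quasispectrum ℝ b ⊆ Set.Icc (0:ℝ) 1 := by
    intro x hx
    refine ⟨quasispectrum_nonneg_of_nonneg b hb_pos x hx, ?_⟩
    rw [Unitization.quasispectrum_eq_spectrum_inr' ℝ ℂ b] at hx
    calc x ≤ ‖x‖ := Real.le_norm_self x
      _ ≤ ‖((b : Unitization ℂ B))‖ := spectrum.norm_le_norm_of_mem hx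
      _ = ‖b‖ := Unitization.norm_inr b
      _ ≤ 1 := hb_norm
  -- basic facts about u
  have hu0 : ∀ n, 0 ≤ u n := by
    intro n
    obtain ⟨f, hf_cont, hf_maps, ⟨η, hη, hf0⟩, hfe⟩ := hfn n
    rw [hfe]
    exact cfcₙ_nonneg (fun x hx => (hf_maps x (hqs hx)).1)
  have hu1 : ∀ n, ‖u n‖ ≤ 1 := by
    intro n
    obtain ⟨f, hf_cont, hf_maps, ⟨η, hη, hf0⟩, hfe⟩ := hfn n
    rw [hfe]
    refine norm_cfcₙ_le (fun x hx => ?_)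
    have := hf_maps x (hqs hx)
    rw [Real.norm_eq_abs, abs_le]
    exact ⟨by linarith [this.1], this.2⟩
  have husa : ∀ n, IsSelfAdjoint (u n) := fun n => IsSelfAdjoint.of_nonneg (hu0 n)
  -- ordering products
  have hkey : ∀ i j : ℕ, i < j → u j * u i = u i := by
    intro i j hij
    induction j, hij using Nat.le_induction with
    | base => exact hunit i
    | succ n hn ih =>
      calc u (n+1) * u i = u (n+1) * (u n * u i) := by rw [ih]
        _ = (u (n+1) * u n) * u i := (mul_assoc _ _ _).symm
        _ = u n * u i := by rw [hunit n]
        _ = u i := ih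
  have hkey' : ∀ i j : ℕ, i < j → u i * u j = u i := by
    intro i j hij
    have := congrArg star (hkey i j hij)
    rwa [star_mul, (husa i).star_eq, (husa j).star_eq] at this
  -- the increments
  set w : ℕ → B := fun n => Nat.casesOn n (u 0) (fun k => u (k+1) - u k) with hw_def
  have hw0 : w 0 = u 0 := rfl
  have hwS : ∀ k, w (k+1) = u (k+1) - u k := fun k => rfl
  have hw_nonneg : ∀ n, 0 ≤ w n := by
    intro n
    cases n with
    | zero => exact hu0 0
    | succ k => exact sub_nonneg.mpr (hmono (Nat.le_succ k))
  have hΔw : ∀ n, Δ n = CFC.sqrt (w n) := by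
    intro n; cases n with
    | zero => exact hΔ0
    | succ k => exact hΔ k
  have hΔsq : ∀ n, Δ n * Δ n = w n := fun n => by
    rw [hΔw n]; exact CFC.sqrt_mul_sqrt_self _ (hw_nonneg n)
  have hΔnonneg : ∀ n, 0 ≤ Δ n := fun n => by rw [hΔw]; exact CFC.sqrt_nonneg _
  have hΔsa : ∀ n, IsSelfAdjoint (Δ n) := fun n => IsSelfAdjoint.of_nonneg (hΔnonneg n)
  have hw_norm : ∀ n, ‖w n‖ ≤ 1 := by
    intro n
    cases n with
    | zero => exact hu1 0
    | succ k =>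
      rw [hwS]
      refine le_trans (CStarAlgebra.norm_le_norm_of_nonneg_of_le
        (sub_nonneg.mpr (hmono (Nat.le_succ k))) (sub_le_self _ (hu0 k))) (hu1 (k+1))
  have hΔnorm : ∀ n, ‖Δ n‖ ≤ 1 := by
    intro n
    have h2 : ‖Δ n‖ * ‖Δ n‖ = ‖w n‖ := by
      calc ‖Δ n‖ * ‖Δ n‖ = ‖star (Δ n) * Δ n‖ := CStarRing.norm_star_mul_self.symm
        _ = ‖Δ n * Δ n‖ := by rw [(hΔsa n).star_eq]
        _ = ‖w n‖ := by rw [hΔsq n]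
    nlinarith [norm_nonneg (Δ n), hw_norm n]
  -- orthogonality of increments
  have hworth : ∀ i j : ℕ, i + 2 ≤ j → w i * w j = 0 := by
    intro i j hij
    obtain ⟨k, rfl⟩ : ∃ k, j = k + 1 := ⟨j - 1, by omega⟩
    rw [hwS]
    cases i with
    | zero =>
      rw [hw0, mul_sub, hkey' 0 (k+1) (by omega), hkey' 0 k (by omega), sub_self]
    | succ i' =>
      rw [hwS, sub_mul, mul_sub, mul_sub,
        hkey' (i'+1) (k+1) (by omega), hkey' (i'+1) k (by omega),
        hkey' i' (k+1) (by omega), hkey' i' k (by omega), sub_self, sub_self, sub_zero]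
  have hΔorth : ∀ i j : ℕ, i + 2 ≤ j ∨ j + 2 ≤ i → Δ i * Δ j = 0 := by
    have key : ∀ p q : ℕ, p + 2 ≤ q → Δ p * Δ q = 0 := by
      intro p q h
      rw [hΔw, hΔw]
      exact aux_sqrt_orth (hw_nonneg p) (hw_nonneg q) (hworth p q h)
    intro i j hcase
    rcases hcase with h | h
    · exact key i j h
    · have := congrArg star (key j i h)
      rwa [star_mul, (hΔsa i).star_eq, (hΔsa j).star_eq, star_zero] at this
  -- telescoping
  have hsum : ∀ N, ∑ j ∈ Finset.range (N+1), w j = u N := by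
    intro N
    induction N with
    | zero => simpa using hw0
    | succ k ih =>
      rw [Finset.sum_range_succ, ih, hwS]
      abel
  have hsub_le : ∀ (F : Finset ℕ) (N : ℕ), F ⊆ Finset.range (N+1) →
      ∑ j ∈ F, w j ≤ u N := by
    intro F N hF
    rw [← hsum N]
    exact Finset.sum_le_sum_of_subset_of_nonneg hF (fun j _ _ => hw_nonneg j)
  have hquot : ∀ K N : ℕ, K ≤ N → ∑ j ∈ Finset.Ico (K+1) (N+1), w j = u N - u K := by
    intro K N h
    rw [Finset.sum_Ico_eq_sub _ (by omega), hsum, hsum]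
  -- u n * x → x for every x
  have hU : ∀ x : B, Tendsto (fun n => u n * x) atTop (𝓝 x) := by
    intro x
    rw [Metric.tendsto_atTop]
    intro ε hε
    obtain ⟨g, ⟨y, rfl⟩, hg⟩ := hb_strict.exists_dist_lt x (show (0:ℝ) < ε/3 by linarith)
    obtain ⟨K, hK_def⟩ : ∃ K : ℝ, K = ‖y‖ * ‖b‖ + 1 := ⟨_, rfl⟩
    have hKpos : (0:ℝ) < K := by rw [hK_def]; positivity
    obtain ⟨N₀, hN₀⟩ := Metric.tendsto_atTop.1 happrox (ε/(3*K)) (by positivity)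
    refine ⟨N₀, fun n hn => ?_⟩
    have hb1 : ‖u n * b - b‖ < ε/(3*K) := by
      have := hN₀ n hn; rwa [dist_eq_norm] at this
    have hxg : ‖x - b * y * b‖ < ε/3 := by rwa [dist_eq_norm] at hg
    have hA : ‖u n * x - u n * (b * y * b)‖ ≤ ‖x - b * y * b‖ := by
      rw [← mul_sub]
      calc ‖u n * (x - b * y * b)‖ ≤ ‖u n‖ * ‖x - b * y * b‖ := norm_mul_le _ _
        _ ≤ 1 * ‖x - b * y * b‖ :=
            mul_le_mul_of_nonneg_right (hu1 n) (norm_nonneg _)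
        _ = ‖x - b * y * b‖ := one_mul _
    have hB : ‖u n * (b * y * b) - b * y * b‖ < ε/3 := by
      have hfactor : u n * (b * y * b) - b * y * b = (u n * b - b) * (y * b) := by
        rw [sub_mul]; simp [mul_assoc]
      rw [hfactor]
      have h5 : ‖(u n * b - b) * (y * b)‖ ≤ ‖u n * b - b‖ * (‖y‖ * ‖b‖) :=
        le_trans (norm_mul_le _ _)
          (mul_le_mul_of_nonneg_left (norm_mul_le _ _) (norm_nonneg _))
      have h6 : ‖u n * b - b‖ * (‖y‖ * ‖b‖) < ε / 3 := by
        have h7 : ‖u n * b - b‖ * (‖y‖ * ‖b‖) ≤ ‖u n * b - b‖ * K :=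
          mul_le_mul_of_nonneg_left (by rw [hK_def]; linarith) (norm_nonneg _)
        have h8 : ‖u n * b - b‖ * K < (ε/(3*K)) * K :=
          mul_lt_mul_of_pos_right hb1 hKpos
        have h9 : (ε/(3*K)) * K = ε/3 := by field_simp
        linarith
      linarith
    have hC : ‖b * y * b - x‖ < ε/3 := by rwa [norm_sub_rev] at hxg
    rw [dist_eq_norm]
    calc ‖u n * x - x‖
        = ‖(u n * x - u n * (b * y * b)) + (u n * (b * y * b) - b * y * b)
            + (b * y * b - x)‖ := by abel_nf
      _ ≤ ‖u n * x - u n * (b * y * b)‖ + ‖u n * (b * y * b) - b * y * b‖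
            + ‖b * y * b - x‖ := norm_add₃_le
      _ < ε/3 + ε/3 + ε/3 := by
          have := lt_of_le_of_lt hA hxg
          linarith
      _ = ε := by ring
  -- multiplier algebra order
  letI : PartialOrder 𝓜(ℂ, B) := CStarAlgebra.spectralOrder _
  letI : StarOrderedRing 𝓜(ℂ, B) := CStarAlgebra.spectralOrderedRing _
  set D : ℕ → 𝓜(ℂ, B) := fun j => DoubleCentralizer.coeHom (𝕜 := ℂ) (Δ j) with hD_def
  have hDsa : ∀ j, IsSelfAdjoint (D j) := by
    intro j
    show star _ = _
    simp only [hD_def, ← map_star, (hΔsa j).star_eq]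
  have hDnorm : ∀ j, ‖D j‖ ≤ 1 := by
    intro j
    simp only [hD_def, aux_norm_coe]
    exact hΔnorm j
  have hDsq : ∀ j, D j * D j = DoubleCentralizer.coeHom (𝕜 := ℂ) (w j) := by
    intro j
    simp only [hD_def, ← map_mul, hΔsq]
  have hDorth : ∀ i j : ℕ, i + 2 ≤ j ∨ j + 2 ≤ i → D i * D j = 0 := by
    intro i j h
    simp only [hD_def, ← map_mul, hΔorth i j h, map_zero]
  set T : ℕ → 𝓜(ℂ, B) := fun N => ∑ j ∈ Finset.range N, D j * m j * D j with hT_def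
  have hXstar : ∀ (F : Finset ℕ) (mm : ℕ → 𝓜(ℂ, B)),
      star (∑ j ∈ F, D j * mm j * D j) = ∑ j ∈ F, D j * star (mm j) * D j := by
    intro F mm
    rw [star_sum]
    refine Finset.sum_congr rfl fun j _ => ?_
    simp only [star_mul, (hDsa j).star_eq, mul_assoc]
  have hnormalg : ∀ Z : 𝓜(ℂ, B), ‖algebraMap ℝ 𝓜(ℂ, B) (M ^ 2) * Z‖ = M ^ 2 * ‖Z‖ := by
    intro Z
    rw [← Algebra.smul_def, norm_smul, Real.norm_eq_abs, abs_of_nonneg (sq_nonneg M)]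
  have hXXle : ∀ (F : Finset ℕ) (mm : ℕ → 𝓜(ℂ, B)), (∀ j, ‖mm j‖ ≤ M) →
      (∀ i ∈ F, ∀ j ∈ F, i ≠ j → D i * D j = 0) →
      star (∑ j ∈ F, D j * mm j * D j) * (∑ j ∈ F, D j * mm j * D j)
        ≤ algebraMap ℝ 𝓜(ℂ, B) (M ^ 2) * DoubleCentralizer.coeHom (𝕜 := ℂ) (∑ j ∈ F, w j) := by
    intro F mm hmm horth
    have hsumDD : ∑ j ∈ F, D j * D j
        = DoubleCentralizer.coeHom (𝕜 := ℂ) (∑ j ∈ F, w j) := by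
      rw [map_sum]
      exact Finset.sum_congr rfl fun j _ => hDsq j
    rw [← hsumDD]
    exact aux_diag F D mm M hDsa hDnorm hmm horth
  -- norm bound on orthogonal families
  have hc1 : ∀ (F : Finset ℕ) (N : ℕ), F ⊆ Finset.range (N+1) →
      (∀ i ∈ F, ∀ j ∈ F, i ≠ j → D i * D j = 0) →
      ∀ (mm : ℕ → 𝓜(ℂ, B)), (∀ j, ‖mm j‖ ≤ M) →
      ‖∑ j ∈ F, D j * mm j * D j‖ ≤ M := by
    intro F N hF horth mm hmm
    have hq0 : (0:B) ≤ ∑ j ∈ F, w j := Finset.sum_nonneg fun j _ => hw_nonneg j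
    have e1 : ‖∑ j ∈ F, D j * mm j * D j‖ ^ 2
        = ‖star (∑ j ∈ F, D j * mm j * D j) * (∑ j ∈ F, D j * mm j * D j)‖ := by
      rw [CStarRing.norm_star_mul_self, sq]
    have e6 : ‖star (∑ j ∈ F, D j * mm j * D j) * (∑ j ∈ F, D j * mm j * D j)‖ ≤ M ^ 2 := by
      refine le_trans (CStarAlgebra.norm_le_norm_of_nonneg_of_le
        (star_mul_self_nonneg _) (hXXle F mm hmm horth)) ?_
      rw [hnormalg, aux_norm_coe]
      calc M ^ 2 * ‖∑ j ∈ F, w j‖ ≤ M ^ 2 * 1 := by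
            refine mul_le_mul_of_nonneg_left ?_ (sq_nonneg M)
            exact le_trans (CStarAlgebra.norm_le_norm_of_nonneg_of_le hq0 (hsub_le F N hF)) (hu1 N)
        _ = M ^ 2 := mul_one _
    have : ‖∑ j ∈ F, D j * mm j * D j‖ ^ 2 ≤ M ^ 2 := by rw [e1]; exact e6
    calc ‖∑ j ∈ F, D j * mm j * D j‖
        = Real.sqrt (‖∑ j ∈ F, D j * mm j * D j‖ ^ 2) := (Real.sqrt_sq (norm_nonneg _)).symm
      _ ≤ Real.sqrt (M ^ 2) := Real.sqrt_le_sqrt this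
      _ = M := Real.sqrt_sq hM0
  -- strict estimate on orthogonal families
  have hc2 : ∀ (F : Finset ℕ) (K N : ℕ), K ≤ N → F ⊆ Finset.Ico (K+1) (N+1) →
      (∀ i ∈ F, ∀ j ∈ F, i ≠ j → D i * D j = 0) →
      ∀ (mm : ℕ → 𝓜(ℂ, B)), (∀ j, ‖mm j‖ ≤ M) → ∀ cc : B,
      ‖(∑ j ∈ F, D j * mm j * D j) * DoubleCentralizer.coeHom (𝕜 := ℂ) cc‖ ^ 2
        ≤ M ^ 2 * (‖cc‖ * ‖u N * cc - u K * cc‖) := by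
    intro F K N hKN hF horth mm hmm cc
    have hq0 : (0:B) ≤ ∑ j ∈ F, w j := Finset.sum_nonneg fun j _ => hw_nonneg j
    have hqle : ∑ j ∈ F, w j ≤ u N - u K := by
      rw [← hquot K N hKN]
      exact Finset.sum_le_sum_of_subset_of_nonneg hF fun j _ _ => hw_nonneg j
    have hXX := hXXle F mm hmm horth
    obtain ⟨cH, hcH⟩ : ∃ cH, cH = DoubleCentralizer.coeHom (𝕜 := ℂ) cc := ⟨_, rfl⟩
    obtain ⟨X, hX⟩ : ∃ X, X = ∑ j ∈ F, D j * mm j * D j := ⟨_, rfl⟩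
    have e1 : ‖X * cH‖ ^ 2 = ‖star (X * cH) * (X * cH)‖ := by
      rw [CStarRing.norm_star_mul_self, sq]
    have e2 : star (X * cH) * (X * cH) = star cH * (star X * X) * cH := by
      rw [star_mul]; simp only [mul_assoc]
    have e3 : star cH * (star X * X) * cH
        ≤ star cH * (algebraMap ℝ 𝓜(ℂ, B) (M ^ 2)
          * DoubleCentralizer.coeHom (𝕜 := ℂ) (∑ j ∈ F, w j)) * cH := by
      rw [hX]
      exact star_left_conjugate_le_conjugate hXX cH
    have e4 : star cH * (algebraMap ℝ 𝓜(ℂ, B) (M ^ 2)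
          * DoubleCentralizer.coeHom (𝕜 := ℂ) (∑ j ∈ F, w j)) * cH
        = algebraMap ℝ 𝓜(ℂ, B) (M ^ 2)
          * DoubleCentralizer.coeHom (𝕜 := ℂ) (star cc * (∑ j ∈ F, w j) * cc) := by
      rw [← mul_assoc (star cH), ← Algebra.commutes (M ^ 2) (star cH)]
      simp only [mul_assoc]
      congr 1
      rw [hcH]
      simp only [map_mul, map_star, mul_assoc]
    have e5 : (0:𝓜(ℂ, B)) ≤ star cH * (star X * X) * cH :=
      star_left_conjugate_nonneg (star_mul_self_nonneg X) cH
    have e6 : ‖star cH * (star X * X) * cH‖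
        ≤ M ^ 2 * ‖star cc * (∑ j ∈ F, w j) * cc‖ := by
      refine le_trans (CStarAlgebra.norm_le_norm_of_nonneg_of_le e5 (e4 ▸ e3)) ?_
      rw [hnormalg, aux_norm_coe]
    have e7 : (0:B) ≤ star cc * (∑ j ∈ F, w j) * cc := star_left_conjugate_nonneg hq0 cc
    have e8 : ‖star cc * (∑ j ∈ F, w j) * cc‖ ≤ ‖cc‖ * ‖u N * cc - u K * cc‖ := by
      refine le_trans (CStarAlgebra.norm_le_norm_of_nonneg_of_le e7
        (star_left_conjugate_le_conjugate hqle cc)) ?_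
      calc ‖star cc * (u N - u K) * cc‖ = ‖star cc * ((u N - u K) * cc)‖ := by rw [mul_assoc]
        _ ≤ ‖star cc‖ * ‖(u N - u K) * cc‖ := norm_mul_le _ _
        _ = ‖cc‖ * ‖u N * cc - u K * cc‖ := by rw [norm_star, sub_mul]
    rw [← hX, ← hcH, e1, e2]
    calc ‖star cH * (star X * X) * cH‖
        ≤ M ^ 2 * ‖star cc * (∑ j ∈ F, w j) * cc‖ := e6
      _ ≤ M ^ 2 * (‖cc‖ * ‖u N * cc - u K * cc‖) :=
          mul_le_mul_of_nonneg_left e8 (sq_nonneg M)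
  -- parity
  have horthE : ∀ (G : Finset ℕ), ∀ i ∈ G.filter (fun j => j % 2 = 0),
      ∀ j ∈ G.filter (fun j => j % 2 = 0), i ≠ j → D i * D j = 0 := by
    intro G i hi j hj hne
    simp only [Finset.mem_filter] at hi hj
    exact hDorth i j (by omega)
  have horthO : ∀ (G : Finset ℕ), ∀ i ∈ G.filter (fun j => ¬ j % 2 = 0),
      ∀ j ∈ G.filter (fun j => ¬ j % 2 = 0), i ≠ j → D i * D j = 0 := by
    intro G i hi j hj hne
    simp only [Finset.mem_filter] at hi hj
    exact hDorth i j (by omega)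
  -- master estimate
  have hmaster : ∀ (mm : ℕ → 𝓜(ℂ, B)), (∀ j, ‖mm j‖ ≤ M) → ∀ (cc : B) (K N : ℕ), K ≤ N →
      ‖(∑ j ∈ Finset.Ico (K+1) (N+1), D j * mm j * D j) * DoubleCentralizer.coeHom (𝕜 := ℂ) cc‖
        ≤ 2 * Real.sqrt (M ^ 2 * (‖cc‖ * ‖u N * cc - u K * cc‖)) := by
    intro mm hmm cc K N hKN
    have hsplit : ∑ j ∈ (Finset.Ico (K+1) (N+1)).filter (fun j => j % 2 = 0), D j * mm j * D j
        + ∑ j ∈ (Finset.Ico (K+1) (N+1)).filter (fun j => ¬ j % 2 = 0), D j * mm j * D j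
        = ∑ j ∈ Finset.Ico (K+1) (N+1), D j * mm j * D j :=
      Finset.sum_filter_add_sum_filter_not _ _ _
    have hbE := hc2 ((Finset.Ico (K+1) (N+1)).filter (fun j => j % 2 = 0)) K N hKN
      (Finset.filter_subset _ _) (horthE _) mm hmm cc
    have hbO := hc2 ((Finset.Ico (K+1) (N+1)).filter (fun j => ¬ j % 2 = 0)) K N hKN
      (Finset.filter_subset _ _) (horthO _) mm hmm cc
    have hsq : ∀ Y : 𝓜(ℂ, B), ‖Y‖ ^ 2 ≤ M ^ 2 * (‖cc‖ * ‖u N * cc - u K * cc‖) →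
        ‖Y‖ ≤ Real.sqrt (M ^ 2 * (‖cc‖ * ‖u N * cc - u K * cc‖)) := by
      intro Y hY
      rw [← Real.sqrt_sq (norm_nonneg Y)]
      exact Real.sqrt_le_sqrt hY
    calc ‖(∑ j ∈ Finset.Ico (K+1) (N+1), D j * mm j * D j)
            * DoubleCentralizer.coeHom (𝕜 := ℂ) cc‖
        = ‖(∑ j ∈ (Finset.Ico (K+1) (N+1)).filter (fun j => j % 2 = 0), D j * mm j * D j)
              * DoubleCentralizer.coeHom (𝕜 := ℂ) cc
            + (∑ j ∈ (Finset.Ico (K+1) (N+1)).filter (fun j => ¬ j % 2 = 0), D j * mm j * D j)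
              * DoubleCentralizer.coeHom (𝕜 := ℂ) cc‖ := by rw [← add_mul, hsplit]
      _ ≤ ‖(∑ j ∈ (Finset.Ico (K+1) (N+1)).filter (fun j => j % 2 = 0), D j * mm j * D j)
              * DoubleCentralizer.coeHom (𝕜 := ℂ) cc‖
          + ‖(∑ j ∈ (Finset.Ico (K+1) (N+1)).filter (fun j => ¬ j % 2 = 0), D j * mm j * D j)
              * DoubleCentralizer.coeHom (𝕜 := ℂ) cc‖ := norm_add_le _ _
      _ ≤ Real.sqrt (M ^ 2 * (‖cc‖ * ‖u N * cc - u K * cc‖))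
          + Real.sqrt (M ^ 2 * (‖cc‖ * ‖u N * cc - u K * cc‖)) :=
          add_le_add (hsq _ hbE) (hsq _ hbO)
      _ = 2 * Real.sqrt (M ^ 2 * (‖cc‖ * ‖u N * cc - u K * cc‖)) := by ring
  -- norm of partial sums
  have hTnorm : ∀ N, ‖T N‖ ≤ 2 * M := by
    intro N
    have hsplit : ∑ j ∈ (Finset.range N).filter (fun j => j % 2 = 0), D j * m j * D j
        + ∑ j ∈ (Finset.range N).filter (fun j => ¬ j % 2 = 0), D j * m j * D j
        = ∑ j ∈ Finset.range N, D j * m j * D j :=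
      Finset.sum_filter_add_sum_filter_not _ _ _
    have hsub : Finset.range N ⊆ Finset.range (N+1) := Finset.range_subset_range.mpr (Nat.le_succ N)
    have h1 := hc1 ((Finset.range N).filter (fun j => j % 2 = 0)) N
      (subset_trans (Finset.filter_subset _ _) hsub) (horthE _) m hmM
    have h2 := hc1 ((Finset.range N).filter (fun j => ¬ j % 2 = 0)) N
      (subset_trans (Finset.filter_subset _ _) hsub) (horthO _) m hmM
    calc ‖T N‖ = ‖∑ j ∈ (Finset.range N).filter (fun j => j % 2 = 0), D j * m j * D j
        + ∑ j ∈ (Finset.range N).filter (fun j => ¬ j % 2 = 0), D j * m j * D j‖ := by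
          rw [hsplit]
      _ ≤ ‖∑ j ∈ (Finset.range N).filter (fun j => j % 2 = 0), D j * m j * D j‖
          + ‖∑ j ∈ (Finset.range N).filter (fun j => ¬ j % 2 = 0), D j * m j * D j‖ :=
          norm_add_le _ _
      _ ≤ M + M := add_le_add h1 h2
      _ = 2 * M := by ring
  -- difference of partial sums
  have hIco : ∀ K N : ℕ, K ≤ N →
      ∑ j ∈ Finset.Ico (K+1) (N+1), D j * m j * D j = T (N+1) - T (K+1) := by
    intro K N hKN
    exact Finset.sum_Ico_eq_sub _ (by omega)
  have hdiffL : ∀ (c : B) (K N : ℕ), K ≤ N →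
      ‖(T (N+1)).fst c - (T (K+1)).fst c‖
        ≤ 2 * Real.sqrt (M ^ 2 * (‖c‖ * ‖u N * c - u K * c‖)) := by
    intro c K N hKN
    calc ‖(T (N+1)).fst c - (T (K+1)).fst c‖
        = ‖(T (N+1) - T (K+1)).fst c‖ := by
          rw [DoubleCentralizer.sub_fst, ContinuousLinearMap.sub_apply]
      _ = ‖DoubleCentralizer.coeHom (𝕜 := ℂ) ((T (N+1) - T (K+1)).fst c)‖ :=
          (aux_norm_coe _).symm
      _ = ‖(T (N+1) - T (K+1)) * DoubleCentralizer.coeHom (𝕜 := ℂ) c‖ := by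
          rw [aux_mul_coe]
      _ = ‖(∑ j ∈ Finset.Ico (K+1) (N+1), D j * m j * D j)
            * DoubleCentralizer.coeHom (𝕜 := ℂ) c‖ := by rw [hIco K N hKN]
      _ ≤ _ := hmaster m hmM c K N hKN
  have hdiffR : ∀ (c : B) (K N : ℕ), K ≤ N →
      ‖(T (N+1)).snd c - (T (K+1)).snd c‖
        ≤ 2 * Real.sqrt (M ^ 2 * (‖star c‖ * ‖u N * star c - u K * star c‖)) := by
    intro c K N hKN
    calc ‖(T (N+1)).snd c - (T (K+1)).snd c‖
        = ‖(T (N+1) - T (K+1)).snd c‖ := by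
          rw [DoubleCentralizer.sub_snd, ContinuousLinearMap.sub_apply]
      _ = ‖DoubleCentralizer.coeHom (𝕜 := ℂ) ((T (N+1) - T (K+1)).snd c)‖ :=
          (aux_norm_coe _).symm
      _ = ‖DoubleCentralizer.coeHom (𝕜 := ℂ) c * (T (N+1) - T (K+1))‖ := by
          rw [aux_coe_mul]
      _ = ‖star (DoubleCentralizer.coeHom (𝕜 := ℂ) c * (T (N+1) - T (K+1)))‖ :=
          (norm_star _).symm
      _ = ‖star (T (N+1) - T (K+1)) * DoubleCentralizer.coeHom (𝕜 := ℂ) (star c)‖ := by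
          rw [star_mul, map_star]
      _ = ‖(∑ j ∈ Finset.Ico (K+1) (N+1), D j * star (m j) * D j)
            * DoubleCentralizer.coeHom (𝕜 := ℂ) (star c)‖ := by
          rw [← hIco K N hKN, hXstar]
      _ ≤ _ := hmaster (fun j => star (m j)) (fun j => by rw [norm_star]; exact hmM j)
            (star c) K N hKN
  -- Cauchy criterion
  have hcauchy : ∀ (g : ℕ → B) (x : B),
      (∀ K N : ℕ, K ≤ N →
        ‖g (N+1) - g (K+1)‖ ≤ 2 * Real.sqrt (M ^ 2 * (‖x‖ * ‖u N * x - u K * x‖))) →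
      CauchySeq g := by
    intro g x hg
    rw [Metric.cauchySeq_iff]
    intro ε hε
    obtain ⟨δ, hδ_def⟩ : ∃ δ : ℝ, δ = ε ^ 2 / (4 * (M ^ 2 * ‖x‖ + 1)) := ⟨_, rfl⟩
    have hδpos : 0 < δ := by rw [hδ_def]; positivity
    obtain ⟨Q, hQ⟩ := Metric.cauchySeq_iff.1 (hU x).cauchySeq δ hδpos
    have main : ∀ p q : ℕ, Q + 1 ≤ p → Q + 1 ≤ q → q ≤ p → dist (g p) (g q) < ε := by
      intro p q hp hq hqp
      obtain ⟨p', rfl⟩ : ∃ k, p = k + 1 := ⟨p - 1, by omega⟩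
      obtain ⟨q', rfl⟩ : ∃ k, q = k + 1 := ⟨q - 1, by omega⟩
      rw [dist_eq_norm]
      have h1 := hg q' p' (by omega)
      have h2 : ‖u p' * x - u q' * x‖ < δ := by
        have := hQ p' (by omega) q' (by omega)
        rwa [dist_eq_norm] at this
      have h3 : M ^ 2 * (‖x‖ * ‖u p' * x - u q' * x‖) < (ε/2) ^ 2 := by
        have ha : (0:ℝ) ≤ M ^ 2 * ‖x‖ := by positivity
        have hb : M ^ 2 * (‖x‖ * ‖u p' * x - u q' * x‖) ≤ (M ^ 2 * ‖x‖) * δ := by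
          rw [← mul_assoc]
          exact mul_le_mul_of_nonneg_left h2.le ha
        have hd : (M ^ 2 * ‖x‖) / (M ^ 2 * ‖x‖ + 1) < 1 := by
          rw [div_lt_one (by positivity)]; linarith
        have hc : (M ^ 2 * ‖x‖) * δ < (ε/2) ^ 2 := by
          rw [hδ_def, show ((ε/2) ^ 2 : ℝ) = ε ^ 2 / 4 by ring,
            ← mul_div_assoc, div_lt_div_iff₀ (by positivity) (by norm_num : (0:ℝ) < 4)]
          nlinarith [pow_pos hε 2, ha]
        linarith
      have h4 : Real.sqrt (M ^ 2 * (‖x‖ * ‖u p' * x - u q' * x‖)) < ε/2 :=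
        (Real.sqrt_lt' (by linarith)).2 h3
      calc ‖g (p'+1) - g (q'+1)‖
          ≤ 2 * Real.sqrt (M ^ 2 * (‖x‖ * ‖u p' * x - u q' * x‖)) := h1
        _ < 2 * (ε/2) := by linarith
        _ = ε := by ring
    refine ⟨Q + 1, fun p hp q hq => ?_⟩
    rcases le_total q p with h | h
    · exact main p q hp hq h
    · rw [dist_comm]; exact main q p hq hp h
  -- limits
  have hCL : ∀ c : B, ∃ l : B, Tendsto (fun N => (T N).fst c) atTop (𝓝 l) := fun c =>
    cauchySeq_tendsto_of_complete (hcauchy (fun N => (T N).fst c) c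
      (fun K N h => hdiffL c K N h))
  have hCR : ∀ c : B, ∃ l : B, Tendsto (fun N => (T N).snd c) atTop (𝓝 l) := fun c =>
    cauchySeq_tendsto_of_complete (hcauchy (fun N => (T N).snd c) (star c)
      (fun K N h => hdiffR c K N h))
  choose Lf hLf using hCL
  choose Rf hRf using hCR
  have hLfbound : ∀ c, ‖Lf c‖ ≤ 2 * M * ‖c‖ := by
    intro c
    refine le_of_tendsto (hLf c).norm (Filter.Eventually.of_forall fun N => ?_)
    calc ‖(T N).fst c‖ ≤ ‖(T N).fst‖ * ‖c‖ := (T N).fst.le_opNorm c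
      _ ≤ 2 * M * ‖c‖ := by
          refine mul_le_mul_of_nonneg_right ?_ (norm_nonneg c)
          rw [DoubleCentralizer.norm_fst]
          exact hTnorm N
  have hRfbound : ∀ c, ‖Rf c‖ ≤ 2 * M * ‖c‖ := by
    intro c
    refine le_of_tendsto (hRf c).norm (Filter.Eventually.of_forall fun N => ?_)
    calc ‖(T N).snd c‖ ≤ ‖(T N).snd‖ * ‖c‖ := (T N).snd.le_opNorm c
      _ ≤ 2 * M * ‖c‖ := by
          refine mul_le_mul_of_nonneg_right ?_ (norm_nonneg c)
          rw [DoubleCentralizer.norm_snd]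
          exact hTnorm N
  let Llin : B →ₗ[ℂ] B :=
    { toFun := Lf
      map_add' := fun c c' => by
        refine tendsto_nhds_unique (hLf (c + c')) ?_
        have : (fun N => (T N).fst (c + c')) = fun N => (T N).fst c + (T N).fst c' := by
          funext N; rw [map_add]
        rw [this]
        exact (hLf c).add (hLf c')
      map_smul' := fun r c => by
        refine tendsto_nhds_unique (hLf (r • c)) ?_
        have : (fun N => (T N).fst (r • c)) = fun N => r • (T N).fst c := by
          funext N; rw [map_smul]
        rw [this]
        exact (hLf c).const_smul r }
  let Rlin : B →ₗ[ℂ] B :=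
    { toFun := Rf
      map_add' := fun c c' => by
        refine tendsto_nhds_unique (hRf (c + c')) ?_
        have : (fun N => (T N).snd (c + c')) = fun N => (T N).snd c + (T N).snd c' := by
          funext N; rw [map_add]
        rw [this]
        exact (hRf c).add (hRf c')
      map_smul' := fun r c => by
        refine tendsto_nhds_unique (hRf (r • c)) ?_
        have : (fun N => (T N).snd (r • c)) = fun N => r • (T N).snd c := by
          funext N; rw [map_smul]
        rw [this]
        exact (hRf c).const_smul r }
  let L : B →L[ℂ] B := Llin.mkContinuous (2 * M) hLfbound
  let R : B →L[ℂ] B := Rlin.mkContinuous (2 * M) hRfbound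
  have hScentral : ∀ x y : B, R x * y = x * L y := by
    intro x y
    have hA : Tendsto (fun N => (T N).snd x * y) atTop (𝓝 (Rf x * y)) :=
      (hRf x).mul tendsto_const_nhds
    have hB : Tendsto (fun N => (T N).snd x * y) atTop (𝓝 (x * Lf y)) := by
      have h3 : (fun N => (T N).snd x * y) = fun N => x * (T N).fst y :=
        funext fun N => (T N).central x y
      rw [h3]
      exact tendsto_const_nhds.mul (hLf y)
    exact tendsto_nhds_unique hA hB
  let S : 𝓜(ℂ, B) := ⟨(L, R), hScentral⟩
  have hiso : Isometry (DoubleCentralizer.coeHom (𝕜 := ℂ) (A := B)) :=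
    AddMonoidHomClass.isometry_of_norm _ aux_norm_coe
  refine ⟨S, fun c => ⟨?_, ?_⟩, ?_⟩
  · -- left strict convergence
    show Tendsto (fun N => T N * DoubleCentralizer.coeHom (𝕜 := ℂ) c) atTop
      (𝓝 (S * DoubleCentralizer.coeHom (𝕜 := ℂ) c))
    have h1 : Tendsto (fun N => DoubleCentralizer.coeHom (𝕜 := ℂ) ((T N).fst c)) atTop
        (𝓝 (DoubleCentralizer.coeHom (𝕜 := ℂ) (Lf c))) :=
      (hiso.continuous.tendsto _).comp (hLf c)
    have h2 : (fun N => DoubleCentralizer.coeHom (𝕜 := ℂ) ((T N).fst c))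
        = fun N => T N * DoubleCentralizer.coeHom (𝕜 := ℂ) c :=
      funext fun N => (aux_mul_coe (T N) c).symm
    rw [h2] at h1
    have h3 : S * DoubleCentralizer.coeHom (𝕜 := ℂ) c
        = DoubleCentralizer.coeHom (𝕜 := ℂ) (Lf c) := aux_mul_coe S c
    rw [h3]
    exact h1
  · -- right strict convergence
    show Tendsto (fun N => DoubleCentralizer.coeHom (𝕜 := ℂ) c * T N) atTop
      (𝓝 (DoubleCentralizer.coeHom (𝕜 := ℂ) c * S))
    have h1 : Tendsto (fun N => DoubleCentralizer.coeHom (𝕜 := ℂ) ((T N).snd c)) atTop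
        (𝓝 (DoubleCentralizer.coeHom (𝕜 := ℂ) (Rf c))) :=
      (hiso.continuous.tendsto _).comp (hRf c)
    have h2 : (fun N => DoubleCentralizer.coeHom (𝕜 := ℂ) ((T N).snd c))
        = fun N => DoubleCentralizer.coeHom (𝕜 := ℂ) c * T N :=
      funext fun N => (aux_coe_mul (T N) c).symm
    rw [h2] at h1
    have h3 : DoubleCentralizer.coeHom (𝕜 := ℂ) c * S
        = DoubleCentralizer.coeHom (𝕜 := ℂ) (Rf c) := aux_coe_mul S c
    rw [h3]
    exact h1
  · -- norm bound
    rw [← DoubleCentralizer.norm_fst]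
    show ‖L‖ ≤ 3 * M
    have h1 : ‖L‖ ≤ 2 * M := Llin.mkContinuous_norm_le (by linarith) hLfbound
    linarith
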